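/- For any real α > 0 and δ > 0, the two-sided sum ∑_{h ∈ ℤ} 2^{α h} e^{-2^h δ} is bounded above by (2/δ)^α · Γ(α) / log 2, where Γ is the Gamma function. -/

import Mathlib

open MeasureTheory Set

/-- For `α, δ > 0`, the two-sided sum `∑_{h ∈ ℤ} 2^{α h} e^{-2^h δ}` converges and is
bounded above by `(2/δ)^α Γ(α) / log 2`. -/
theorem sum_scale_bound (α δ : ℝ) (hα : 0 < α) (hδ : 0 < δ) :
    Summable (fun h : ℤ => (2:ℝ) ^ (α * (h:ℝ)) * Real.exp (-(2:ℝ) ^ ((h:ℝ)) * δ)) ∧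
    (∑' h : ℤ, (2:ℝ) ^ (α * (h:ℝ)) * Real.exp (-(2:ℝ) ^ ((h:ℝ)) * δ)) ≤
      (2 / δ) ^ α * Real.Gamma α / Real.log 2 := by
  set c := Real.log 2 with hc
  have hc0 : 0 < c := Real.log_pos one_lt_two
  set F : ℝ → ℝ := fun y => Real.exp (α * y) * Real.exp (-Real.exp y * δ) with hF
  set f : ℝ → ℝ := fun x => (2:ℝ) ^ (α * x) * Real.exp (-(2:ℝ) ^ x * δ) with hfdef
  set g : ℝ → ℝ := fun t => t ^ (α - 1) * Real.exp (-(δ * t)) with hg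
  have hfc : ∀ x, f x = F (c * x) := by
    intro x
    simp only [hF, hfdef, Real.rpow_def_of_pos (by norm_num : (0:ℝ) < 2), ← hc]
    congr 2 <;> ring
  have hg_int : IntegrableOn g (Ioi 0) := by
    have := integrableOn_rpow_mul_exp_neg_mul_rpow
      (by linarith : (-1:ℝ) < α - 1) (zero_lt_one : (0:ℝ) < 1) hδ
    simpa [hg, Real.rpow_one, neg_mul] using this
  have hderiv : ∀ x ∈ (univ : Set ℝ),
      HasDerivWithinAt Real.exp (Real.exp x) univ x :=
    fun x _ => (Real.hasDerivAt_exp x).hasDerivWithinAt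
  have hinj : InjOn Real.exp univ := Real.exp_injective.injOn
  have himg : Real.exp '' univ = Ioi 0 := by
    rw [image_univ, Real.range_exp]
  have hFeq : ∀ x, |Real.exp x| • g (Real.exp x) = F x := by
    intro x
    simp only [hg, hF, abs_of_pos (Real.exp_pos x), smul_eq_mul,
      Real.rpow_def_of_pos (Real.exp_pos x), Real.log_exp, ← Real.exp_add]
    rw [Real.exp_eq_exp]
    ring
  have hFint : Integrable F := by
    have h1 := (integrableOn_image_iff_integrableOn_abs_deriv_smul
      MeasurableSet.univ hderiv hinj g).mp (himg ▸ hg_int)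
    rw [integrableOn_univ] at h1
    exact (integrable_congr (Filter.Eventually.of_forall hFeq)).mp h1
  have hFval : ∫ y, F y = (1/δ) ^ α * Real.Gamma α := by
    have h2 := integral_image_eq_integral_abs_deriv_smul
      MeasurableSet.univ hderiv hinj g
    rw [himg, hg] at h2
    rw [Real.integral_rpow_mul_exp_neg_mul_Ioi hα hδ] at h2
    rw [h2, setIntegral_univ]
    exact integral_congr_ae (Filter.Eventually.of_forall fun x => (hFeq x).symm)
  have hfint : Integrable f := by
    have := hFint.comp_mul_left' hc0.ne'
    exact this.congr (Filter.Eventually.of_forall fun x => (hfc x).symm)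
  have hfval : ∫ x, f x = (1/δ) ^ α * Real.Gamma α / c := by
    calc ∫ x, f x = ∫ x, F (c * x) := integral_congr_ae (Filter.Eventually.of_forall hfc)
      _ = |c⁻¹| • ∫ y, F y := Measure.integral_comp_mul_left F c
      _ = (1/δ) ^ α * Real.Gamma α / c := by
          rw [abs_of_pos (inv_pos.mpr hc0), hFval, smul_eq_mul]
          field_simp
  set s : ℤ → Set ℝ := fun h => Ioc ((h:ℝ) - 1) h with hs
  have hmeas : ∀ h, MeasurableSet (s h) := fun h => measurableSet_Ioc
  have hdisj : Pairwise (Function.onFun Disjoint s) := by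
    intro m n hmn
    simp only [Function.onFun, hs]
    rw [Ioc_disjoint_Ioc]
    rcases lt_or_gt_of_ne hmn with h | h
    · have : (m:ℝ) ≤ (n:ℝ) - 1 := by
        have : (m:ℝ) + 1 ≤ n := by exact_mod_cast Int.add_one_le_iff.mpr h
        linarith
      calc min (m:ℝ) n ≤ (m:ℝ) := min_le_left _ _
        _ ≤ (n:ℝ) - 1 := this
        _ ≤ max ((m:ℝ) - 1) ((n:ℝ) - 1) := le_max_right _ _
    · have : (n:ℝ) ≤ (m:ℝ) - 1 := by
        have : (n:ℝ) + 1 ≤ m := by exact_mod_cast Int.add_one_le_iff.mpr h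
        linarith
      calc min (m:ℝ) n ≤ (n:ℝ) := min_le_right _ _
        _ ≤ (m:ℝ) - 1 := this
        _ ≤ max ((m:ℝ) - 1) ((n:ℝ) - 1) := le_max_left _ _
  have hcover : ⋃ h, s h = univ := by
    ext x
    simp only [mem_iUnion, mem_univ, iff_true, hs, mem_Ioc]
    exact ⟨⌈x⌉, by
      constructor
      · have := Int.ceil_lt_add_one x
        linarith
      · exact Int.le_ceil x⟩
  have hHasSum : HasSum (fun h => ∫ x in s h, f x) (∫ x, f x) := by
    have h3 := hasSum_integral_iUnion (μ := volume) (f := f) hmeas hdisj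
      (by rw [hcover]; exact hfint.integrableOn)
    rwa [hcover, setIntegral_univ] at h3
  have hbound : ∀ h : ℤ, (2:ℝ) ^ (α * (h:ℝ)) * Real.exp (-(2:ℝ) ^ ((h:ℝ)) * δ) ≤
      (2:ℝ) ^ α * ∫ x in s h, f x := by
    intro h
    have hint : IntegrableOn f (s h) := hfint.integrableOn
    have hμ : (volume (s h)).toReal = 1 := by
      simp [hs, Real.volume_Ioc]
    have hconst : (2:ℝ) ^ (α * ((h:ℝ) - 1)) * Real.exp (-(2:ℝ) ^ ((h:ℝ)) * δ) ≤
        ∫ x in s h, f x := by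
      have hci : ∫ x in s h, ((2:ℝ) ^ (α * ((h:ℝ) - 1)) * Real.exp (-(2:ℝ) ^ ((h:ℝ)) * δ))
          = (2:ℝ) ^ (α * ((h:ℝ) - 1)) * Real.exp (-(2:ℝ) ^ ((h:ℝ)) * δ) := by
        rw [setIntegral_const, measureReal_def, hμ, one_smul]
      rw [← hci]
      refine setIntegral_mono_on ((integrableOn_const_iff enorm_ne_top).mpr ?_) hint (hmeas h) ?_
      · right; simp [hs, Real.volume_Ioc]
      · intro x hx
        obtain ⟨hx1, hx2⟩ := hx
        have e1 : (2:ℝ) ^ (α * ((h:ℝ) - 1)) ≤ (2:ℝ) ^ (α * x) :=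
          Real.rpow_le_rpow_of_exponent_le one_le_two
            (mul_le_mul_of_nonneg_left hx1.le hα.le)
        have e2 : Real.exp (-(2:ℝ) ^ ((h:ℝ)) * δ) ≤ Real.exp (-(2:ℝ) ^ x * δ) := by
          apply Real.exp_le_exp.mpr
          have : (2:ℝ) ^ x ≤ (2:ℝ) ^ ((h:ℝ)) :=
            Real.rpow_le_rpow_of_exponent_le one_le_two hx2
          nlinarith
        exact mul_le_mul e1 e2 (Real.exp_pos _).le
          (Real.rpow_nonneg (by norm_num) _)
    calc (2:ℝ) ^ (α * (h:ℝ)) * Real.exp (-(2:ℝ) ^ ((h:ℝ)) * δ)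
        = (2:ℝ) ^ α * ((2:ℝ) ^ (α * ((h:ℝ) - 1)) * Real.exp (-(2:ℝ) ^ ((h:ℝ)) * δ)) := by
          rw [show α * (h:ℝ) = α + α * ((h:ℝ) - 1) by ring,
            Real.rpow_add (by norm_num : (0:ℝ) < 2), mul_assoc]
      _ ≤ (2:ℝ) ^ α * ∫ x in s h, f x := by
          exact mul_le_mul_of_nonneg_left hconst (Real.rpow_nonneg (by norm_num) _)
  have hSumInt : Summable (fun h : ℤ => ∫ x in s h, f x) := hHasSum.summable
  have hS2 : Summable (fun h : ℤ => (2:ℝ) ^ α * ∫ x in s h, f x) := hSumInt.mul_left _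
  have hsum : Summable (fun h : ℤ => (2:ℝ) ^ (α * (h:ℝ)) * Real.exp (-(2:ℝ) ^ ((h:ℝ)) * δ)) :=
    Summable.of_nonneg_of_le (fun h => by positivity) hbound hS2
  refine ⟨hsum, ?_⟩
  calc (∑' h : ℤ, (2:ℝ) ^ (α * (h:ℝ)) * Real.exp (-(2:ℝ) ^ ((h:ℝ)) * δ))
      ≤ ∑' h : ℤ, (2:ℝ) ^ α * ∫ x in s h, f x := Summable.tsum_le_tsum hbound hsum hS2
    _ = (2:ℝ) ^ α * ∫ x, f x := by rw [tsum_mul_left, hHasSum.tsum_eq]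
    _ = (2 / δ) ^ α * Real.Gamma α / Real.log 2 := by
        rw [hfval, ← hc]
        rw [show (2:ℝ) ^ α * ((1/δ) ^ α * Real.Gamma α / c)
            = ((2:ℝ) ^ α * (1/δ) ^ α) * Real.Gamma α / c by ring,
          ← Real.mul_rpow (by norm_num) (by positivity), mul_one_div]
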